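/- arXiv:1309.5144 — 3 statements merged into one kernel-verified Lean document; each statement's English description precedes it below -/
import Mathlib

section
/- The safety predicate is admissible (preserves lubs of ascending chains): for any annotated type θ and ascending chain u : ℕ → ⟦θ*⟧_{⊥⋆}, if safe θ (uᵢ) for all i, then safe θ (⨆ᵢ uᵢ). -/
/-- Lifted domain `C_{⊥⋆}`: adds a bottom element `⊥` (divergence, `none`)
and an error element `⋆` (`some (Sum.inr ())`), with `⋆` above only `⊥`. -/
abbrev LS (C : Type) : Type := WithBot (C ⊕ Unit)

/-- Simple types. -/
inductive Ty : Type
  | bool : Ty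
  | arrow : Ty → Ty → Ty

/-- Semantic domains: `⟦bool⟧ = Bool`, `⟦t₁→t₂⟧ = Set Privileges → ⟦t₁⟧ → ⟦t₂⟧_{⊥⋆}`. -/
def Den (Privileges : Type) : Ty → Type
  | Ty.bool => Bool
  | Ty.arrow t1 t2 => Set Privileges → Den Privileges t1 → LS (Den Privileges t2)

/-- The cpo order: `Bool` discrete (via its partial order), functions ordered pointwise. -/
noncomputable def denOrder (Privileges : Type) : (t : Ty) → PartialOrder (Den Privileges t)
  | Ty.bool => inferInstanceAs (PartialOrder Bool)
  | Ty.arrow t1 t2 =>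
      letI := denOrder Privileges t2
      inferInstanceAs (PartialOrder (Set Privileges → Den Privileges t1 → LS (Den Privileges t2)))

noncomputable instance (Privileges : Type) (t : Ty) : PartialOrder (Den Privileges t) :=
  denOrder Privileges t

/-- Annotated types: `θ ::= bool | θ₁ →^Π θ₂`. -/
inductive ATy (Privileges : Type) : Type
  | bool : ATy Privileges
  | arrow : ATy Privileges → Set Privileges → ATy Privileges → ATy Privileges

/-- Erasure of annotations. -/
def ATy.erase {Privileges : Type} : ATy Privileges → Ty
  | ATy.bool => Ty.bool
  | ATy.arrow t1 _ t2 => Ty.arrow t1.erase t2.erase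

/-- The safety predicate. -/
def safe {Privileges : Type} : (θ : ATy Privileges) → LS (Den Privileges θ.erase) → Prop
  | _, none => True
  | _, some (Sum.inr _) => False
  | ATy.bool, some (Sum.inl _) => True
  | ATy.arrow θ1 Pi θ2, some (Sum.inl f) =>
      ∀ (P : Set Privileges), Pi ⊆ P → ∀ d : Den Privileges θ1.erase,
        safe θ1 (some (Sum.inl d)) → safe θ2 (f P d)

lemma safe_bot {Privileges : Type} (θ : ATy Privileges) : safe θ (none : LS (Den Privileges θ.erase)) := by
  cases θ <;> trivial

lemma lub_ne_err {C : Type} [PartialOrder C] (u : ℕ → LS C) (v : LS C)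
    (hv : IsLUB (Set.range u) v) (h : ∀ i x, u i ≠ some (Sum.inr x)) :
    ∀ x, v ≠ some (Sum.inr x) := by
  intro x hx
  by_cases hc : ∃ i c, u i = (some (Sum.inl c) : LS C)
  · obtain ⟨i, c, hic⟩ := hc
    have := hv.1 (Set.mem_range_self i)
    rw [hic, hx] at this
    exact Sum.not_inl_le_inr (WithBot.coe_le_coe.1 this)
  · simp only [not_exists] at hc
    have hb : v ≤ ⊥ := hv.2 (by
      rintro y ⟨i, rfl⟩
      match hui : u i with
      | none => exact le_rfl
      | some (Sum.inl c) => exact absurd hui (hc i c)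
      | some (Sum.inr z) => exact absurd hui (h i z))
    rw [hx] at hb
    exact absurd hb (WithBot.not_coe_le_bot _)

/-- `safe` is admissible: it is preserved by least upper bounds of ascending chains. -/
theorem safe_admissible {Privileges : Type} (θ : ATy Privileges)
    (u : ℕ → LS (Den Privileges θ.erase)) (hu : Monotone u)
    (v : LS (Den Privileges θ.erase)) (hv : IsLUB (Set.range u) v)
    (h : ∀ i, safe θ (u i)) : safe θ v := by
  induction θ with
  | bool =>
    match v, hv with
    | none, hv => trivial
    | some (Sum.inl b), hv => trivial
    | some (Sum.inr x), hv =>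
      exact absurd rfl (lub_ne_err u _ hv
        (fun i y hiy => by have := h i; rw [hiy] at this; exact this) x)
  | arrow θ1 Pi θ2 ih1 ih2 =>
    classical
    have hne : ∀ i y, u i ≠ some (Sum.inr y) :=
      fun i y hiy => by have := h i; rw [hiy] at this; exact this
    match v, hv with
    | none, hv => trivial
    | some (Sum.inr x), hv => exact absurd rfl (lub_ne_err u _ hv hne x)
    | some (Sum.inl f), hv =>
      intro P hP d hd
      -- pointwise chain
      set g : ℕ → LS (Den Privileges θ2.erase) := fun i =>
        match u i with
        | none => none
        | some (Sum.inl gi) => gi P d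
        | some (Sum.inr _) => none with hg
      have hgbot : ∀ i, u i = none → g i = none := by
        intro i hi; simp only [hg]; rw [hi]
      have hgeq : ∀ i gi, u i = (some (Sum.inl gi) : LS (Den Privileges (ATy.arrow θ1 Pi θ2).erase)) →
          g i = gi P d := by
        intro i gi hi; simp only [hg]; rw [hi]
      -- each gi ≤ f pointwise when u i = some (inl gi)
      have hle : ∀ i gi, u i = some (Sum.inl gi) → ∀ P' d', gi P' d' ≤ f P' d' := by
        intro i gi hui
        have hiv := hv.1 (Set.mem_range_self i)
        rw [hui] at hiv
        have h1 : gi ≤ f := Sum.inl_le_inl_iff.1 (WithBot.coe_le_coe.1 hiv)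
        exact h1
      have hgmono : Monotone g := by
        intro i j hij
        have huij := hu hij
        match hui : u i, huj : u j with
        | none, _ =>
          rw [hgbot i hui]; exact bot_le
        | some (Sum.inr y), _ => exact absurd hui (hne i y)
        | some (Sum.inl gi), none =>
          rw [hui, huj] at huij
          exact absurd huij (WithBot.not_coe_le_bot _)
        | some (Sum.inl gi), some (Sum.inr y) => exact absurd huj (hne j y)
        | some (Sum.inl gi), some (Sum.inl gj) =>
          rw [hgeq i gi hui, hgeq j gj huj]
          rw [hui, huj] at huij
          have h1 : gi ≤ gj := Sum.inl_le_inl_iff.1 (WithBot.coe_le_coe.1 huij)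
          have h2 : ∀ P' d', gi P' d' ≤ gj P' d' := h1
          exact h2 P d
      have hgsafe : ∀ i, safe θ2 (g i) := by
        intro i
        match hui : u i with
        | none => rw [hgbot i hui]; exact safe_bot θ2
        | some (Sum.inr y) => exact absurd hui (hne i y)
        | some (Sum.inl gi) =>
          rw [hgeq i gi hui]
          have := h i
          rw [hui] at this
          exact this P hP d hd
      have hglub : IsLUB (Set.range g) (f P d) := by
        constructor
        · rintro y ⟨i, rfl⟩
          match hui : u i with
          | none => rw [hgbot i hui]; exact bot_le
          | some (Sum.inr y) => exact absurd hui (hne i y)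
          | some (Sum.inl gi) =>
            rw [hgeq i gi hui]
            exact hle i gi hui P d
        · intro w hw
          set f' : Set Privileges → Den Privileges θ1.erase → LS (Den Privileges θ2.erase) :=
            fun P' d' => if P' = P ∧ d' = d then w else f P' d' with hf'
          have hub : (some (Sum.inl f') : LS (Den Privileges (ATy.arrow θ1 Pi θ2).erase)) ∈
              upperBounds (Set.range u) := by
            rintro y ⟨i, rfl⟩
            match hui : u i with
            | none => exact bot_le
            | some (Sum.inr y) => exact absurd hui (hne i y)
            | some (Sum.inl gi) =>
              refine WithBot.coe_le_coe.2 (Sum.inl_le_inl_iff.2 ?_)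
              show ∀ P' d', gi P' d' ≤ f' P' d'
              intro P' d'
              by_cases hc : P' = P ∧ d' = d
              · obtain ⟨rfl, rfl⟩ := hc
                have hgw : gi P' d' ≤ w := (hgeq i gi hui) ▸ hw ⟨i, rfl⟩
                simpa [hf'] using hgw
              · rw [hf']; simp only [if_neg hc]
                exact hle i gi hui P' d'
          have hvf' := hv.2 hub
          have h1 : f ≤ f' := Sum.inl_le_inl_iff.1 (WithBot.coe_le_coe.1 hvf')
          have h2 : ∀ P' d', f P' d' ≤ f' P' d' := h1
          have h3 : f P d ≤ if P = P ∧ d = d then w else f P d := h2 P d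
          simpa using h3
      exact ih2 g hgmono (f P d) hglub hgsafe
end

section
/- The simulation relation preserves lubs: for any simple type t, if u : ℕ → ⟦t⟧ and u' : ℕ → ⟦t⟧ˢ are ascending chains with sim t uᵢ u'ᵢ for all i, then sim t (⨆ᵢ uᵢ) (⨆ᵢ u'ᵢ). -/
/-- Nonempty stacks of frames (principal, enabled privileges). -/
def Stacks (Principals Privileges : Type) : Type :=
  {l : List (Principals × Set Privileges) // l ≠ []}

/-- Stack semantic domains. -/
def DenS (Principals Privileges : Type) : Ty → Type
  | Ty.bool => Bool
  | Ty.arrow t1 t2 =>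
      Stacks Principals Privileges → DenS Principals Privileges t1 →
        LS (DenS Principals Privileges t2)

noncomputable def denSOrder (Principals Privileges : Type) :
    (t : Ty) → PartialOrder (DenS Principals Privileges t)
  | Ty.bool => inferInstanceAs (PartialOrder Bool)
  | Ty.arrow t1 t2 =>
      letI := denSOrder Principals Privileges t2
      inferInstanceAs (PartialOrder (Stacks Principals Privileges →
        DenS Principals Privileges t1 → LS (DenS Principals Privileges t2)))

noncomputable instance (Principals Privileges : Type) (t : Ty) :
    PartialOrder (DenS Principals Privileges t) :=
  denSOrder Principals Privileges t

/-- Stack inspection predicate. -/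
def check {Principals Privileges : Type} (A : Principals → Set Privileges)
    (p : Privileges) : List (Principals × Set Privileges) → Prop
  | [] => False
  | ⟨n, P⟩ :: S => p ∈ A n ∧ (p ∈ P ∨ check A p S)

/-- Enabled, authorized privileges of a stack. -/
def privs {Principals Privileges : Type} (A : Principals → Set Privileges)
    (S : Stacks Principals Privileges) : Set Privileges :=
  {p | check A p S.val}

/-- The simulation relation between the eager and the stack semantics. -/
def sim {Principals Privileges : Type} (A : Principals → Set Privileges) :
    (t : Ty) → LS (Den Privileges t) → LS (DenS Principals Privileges t) → Prop
  | _, none, none => True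
  | _, none, some _ => False
  | _, some _, none => False
  | _, some (Sum.inr _), some (Sum.inr _) => True
  | _, some (Sum.inr _), some (Sum.inl _) => False
  | _, some (Sum.inl _), some (Sum.inr _) => False
  | Ty.bool, some (Sum.inl b), some (Sum.inl b') => b = b'
  | Ty.arrow t1 t2, some (Sum.inl f), some (Sum.inl f') =>
      ∀ (S : Stacks Principals Privileges) (d : Den Privileges t1)
        (d' : DenS Principals Privileges t1),
        sim A t1 (some (Sum.inl d)) (some (Sum.inl d')) →
        sim A t2 (f (privs A S) d) (f' S d')


section helpers
variable {α β : Type*} [PartialOrder α] [PartialOrder β]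

lemma le_of_inl_le {a : α} {x : WithBot (α ⊕ β)} (h : ((Sum.inl a : α ⊕ β) : WithBot (α ⊕ β)) ≤ x) :
    ∃ b, x = some (Sum.inl b) ∧ a ≤ b := by
  rw [WithBot.coe_le_iff] at h
  obtain ⟨s, rfl, hs⟩ := h
  rcases s with b | y
  · exact ⟨b, rfl, Sum.inl_le_inl_iff.mp hs⟩
  · exact absurd hs (Sum.not_inl_le_inr)

lemma eq_of_inr_le {y : β} {x : WithBot (α ⊕ β)} (h : ((Sum.inr y : α ⊕ β) : WithBot (α ⊕ β)) ≤ x) :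
    ∃ z, x = some (Sum.inr z) := by
  rw [WithBot.coe_le_iff] at h
  obtain ⟨s, rfl, hs⟩ := h
  rcases s with b | z
  · exact absurd hs (Sum.not_inr_le_inl)
  · exact ⟨z, rfl⟩

lemma isLUB_some_inl {c : ℕ → α} {v : WithBot (α ⊕ β)}
    (h : IsLUB (Set.range (fun i => ((Sum.inl (c i) : α ⊕ β) : WithBot (α ⊕ β)))) v) :
    ∃ w, v = some (Sum.inl w) ∧ IsLUB (Set.range c) w := by
  obtain ⟨w, rfl, -⟩ := le_of_inl_le (h.1 ⟨0, rfl⟩)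
  refine ⟨w, rfl, ?_, ?_⟩
  · rintro _ ⟨i, rfl⟩
    exact Sum.inl_le_inl_iff.mp (WithBot.coe_le_coe.mp (h.1 ⟨i, rfl⟩))
  · intro d hd
    have hub : ((Sum.inl d : α ⊕ β) : WithBot (α ⊕ β)) ∈ upperBounds
        (Set.range (fun i => ((Sum.inl (c i) : α ⊕ β) : WithBot (α ⊕ β)))) := by
      rintro _ ⟨i, rfl⟩
      exact WithBot.coe_le_coe.mpr (Sum.inl_le_inl_iff.mpr (hd ⟨i, rfl⟩))
    exact Sum.inl_le_inl_iff.mp (WithBot.coe_le_coe.mp (h.2 hub))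
end helpers

section helpers2
variable {γ : Type*} {δ : Type*} [PartialOrder δ]

lemma isLUB_pi_apply {s : Set (γ → δ)} {F : γ → δ}
    (h : IsLUB s F) (x : γ) : IsLUB ((fun f => f x) '' s) (F x) := by
  classical
  constructor
  · rintro _ ⟨f, hf, rfl⟩; exact h.1 hf x
  · intro b hb
    have hub : Function.update F x b ∈ upperBounds s := by
      intro f hf y
      by_cases hy : y = x
      · subst hy; rw [Function.update_self]; exact hb ⟨f, hf, rfl⟩
      · rw [Function.update_of_ne hy]; exact h.1 hf y
    have h2 := h.2 hub x
    rwa [Function.update_self] at h2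

lemma isLUB_range_apply {c : ℕ → γ → δ} {F : γ → δ}
    (h : IsLUB (Set.range c) F) (x : γ) : IsLUB (Set.range (fun i => c i x)) (F x) := by
  have h2 := isLUB_pi_apply h x
  rwa [← Set.range_comp] at h2

lemma isLUB_range_shift {u : ℕ → δ} (hu : Monotone u) (N : ℕ) {v : δ}
    (h : IsLUB (Set.range u) v) : IsLUB (Set.range (fun i => u (N + i))) v := by
  constructor
  · rintro _ ⟨i, rfl⟩; exact h.1 ⟨N + i, rfl⟩
  · intro b hb
    apply h.2
    rintro _ ⟨i, rfl⟩
    exact le_trans (hu (Nat.le_add_left i N)) (hb ⟨i, rfl⟩)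
end helpers2

lemma sim_shape {Principals Privileges : Type} (A : Principals → Set Privileges) (t : Ty)
    {d : LS (Den Privileges t)} {d' : LS (DenS Principals Privileges t)} (h : sim A t d d') :
    (d = none ∧ d' = none) ∨ (d = some (Sum.inr ()) ∧ d' = some (Sum.inr ())) ∨
    (∃ a b, d = some (Sum.inl a) ∧ d' = some (Sum.inl b)) := by
  cases t <;> rcases d with _ | (a | x) <;> rcases d' with _ | (b | y) <;>
    first
      | exact Or.inl ⟨rfl, rfl⟩
      | exact Or.inr (Or.inl ⟨rfl, rfl⟩)
      | exact Or.inr (Or.inr ⟨_, _, rfl, rfl⟩)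
      | exact h.elim


lemma sim_chains {Principals Privileges : Type} (A : Principals → Set Privileges) (t : Ty)
    (u : ℕ → LS (Den Privileges t)) (u' : ℕ → LS (DenS Principals Privileges t))
    (hu : Monotone u) (hu' : Monotone u')
    (v : LS (Den Privileges t)) (v' : LS (DenS Principals Privileges t))
    (hv : IsLUB (Set.range u) v) (hv' : IsLUB (Set.range u') v')
    (h : ∀ i, sim A t (u i) (u' i)) :
    (v = none ∧ v' = none) ∨ (v = some (Sum.inr ()) ∧ v' = some (Sum.inr ())) ∨
    (∃ (c : ℕ → Den Privileges t) (c' : ℕ → DenS Principals Privileges t), ∃ w w',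
      v = some (Sum.inl w) ∧ v' = some (Sum.inl w') ∧
      IsLUB (Set.range c) w ∧ IsLUB (Set.range c') w' ∧ Monotone c ∧ Monotone c' ∧
      ∀ i, sim A t (some (Sum.inl (c i))) (some (Sum.inl (c' i)))) := by
  by_cases hb : ∀ i, u i = none
  · left
    have hb' : ∀ i, u' i = none := by
      intro i
      rcases sim_shape A t (h i) with ⟨-, h2⟩ | ⟨h1, -⟩ | ⟨a, b, h1, -⟩ <;>
        first | exact h2 | (rw [hb i] at h1; cases h1)
    have hbot : IsLUB (Set.range u) (⊥ : LS (Den Privileges t)) :=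
      ⟨by rintro _ ⟨i, rfl⟩; rw [hb i]; exact le_rfl, fun b _ => bot_le⟩
    have hbot' : IsLUB (Set.range u') (⊥ : LS (DenS Principals Privileges t)) :=
      ⟨by rintro _ ⟨i, rfl⟩; rw [hb' i]; exact le_rfl, fun b _ => bot_le⟩
    exact ⟨hv.unique hbot, hv'.unique hbot'⟩
  · obtain ⟨N, hN⟩ := not_forall.mp hb
    rcases hun : u N with _ | (c0 | x0)
    · exact absurd hun hN
    · -- u N = some (Sum.inl c0)
      right; right
      have hB : ∃ b, u' N = some (Sum.inl b) := by
        rcases sim_shape A t (h N) with ⟨h1, -⟩ | ⟨h1, -⟩ | ⟨a, b, h1, h2⟩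
        · rw [hun] at h1; cases h1
        · rw [hun] at h1; cases h1
        · exact ⟨b, h2⟩
      obtain ⟨b0, hB⟩ := hB
      have hc : ∀ i, ∃ a, u (N + i) = some (Sum.inl a) := by
        intro i
        have hle := hu (Nat.le_add_right N i)
        rw [hun] at hle
        obtain ⟨b, hbb, -⟩ := le_of_inl_le hle
        exact ⟨b, hbb⟩
      choose c hcc using hc
      have hc' : ∀ i, ∃ a, u' (N + i) = some (Sum.inl a) := by
        intro i
        have hle := hu' (Nat.le_add_right N i)
        rw [hB] at hle
        obtain ⟨b, hbb, -⟩ := le_of_inl_le hle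
        exact ⟨b, hbb⟩
      choose c' hcc' using hc'
      have hmc : Monotone c := by
        intro i j hij
        have h2 := hu (show N + i ≤ N + j by omega)
        rw [hcc i, hcc j] at h2
        exact Sum.inl_le_inl_iff.mp (WithBot.coe_le_coe.mp h2)
      have hmc' : Monotone c' := by
        intro i j hij
        have h2 := hu' (show N + i ≤ N + j by omega)
        rw [hcc' i, hcc' j] at h2
        exact Sum.inl_le_inl_iff.mp (WithBot.coe_le_coe.mp h2)
      have hsh := isLUB_range_shift hu N hv
      rw [show (fun i => u (N + i))
          = fun i => ((Sum.inl (c i) : Den Privileges t ⊕ Unit) : LS (Den Privileges t))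
          from funext hcc] at hsh
      obtain ⟨w, hw, hlw⟩ := isLUB_some_inl hsh
      have hsh' := isLUB_range_shift hu' N hv'
      rw [show (fun i => u' (N + i)) = fun i =>
          ((Sum.inl (c' i) : DenS Principals Privileges t ⊕ Unit) :
            LS (DenS Principals Privileges t)) from funext hcc'] at hsh'
      obtain ⟨w', hw', hlw'⟩ := isLUB_some_inl hsh'
      exact ⟨c, c', w, w', hw, hw', hlw, hlw', hmc, hmc',
        fun i => by have h2 := h (N + i); rwa [hcc i, hcc' i] at h2⟩
    · -- u N = some (Sum.inr x0)
      right; left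
      cases x0
      have hB : u' N = some (Sum.inr ()) := by
        rcases sim_shape A t (h N) with ⟨h1, -⟩ | ⟨-, h2⟩ | ⟨a, b, h1, -⟩
        · rw [hun] at h1; cases h1
        · exact h2
        · rw [hun] at h1; cases h1
      have hvv : v = some (Sum.inr ()) := by
        have hub : (some (Sum.inr ()) : LS (Den Privileges t)) ∈ upperBounds (Set.range u) := by
          rintro _ ⟨i, rfl⟩
          have h1 : u N ≤ u (max i N) := hu (le_max_right i N)
          rw [hun] at h1
          obtain ⟨z, hz⟩ := eq_of_inr_le h1
          cases z
          have h3 := hu (le_max_left i N)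
          rw [hz] at h3
          exact h3
        refine le_antisymm (hv.2 hub) ?_
        rw [← hun]
        exact hv.1 ⟨N, rfl⟩
      have hvv' : v' = some (Sum.inr ()) := by
        have hub : (some (Sum.inr ()) : LS (DenS Principals Privileges t))
            ∈ upperBounds (Set.range u') := by
          rintro _ ⟨i, rfl⟩
          have h1 : u' N ≤ u' (max i N) := hu' (le_max_right i N)
          rw [hB] at h1
          obtain ⟨z, hz⟩ := eq_of_inr_le h1
          cases z
          have h3 := hu' (le_max_left i N)
          rw [hz] at h3
          exact h3
        refine le_antisymm (hv'.2 hub) ?_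
        rw [← hB]
        exact hv'.1 ⟨N, rfl⟩
      exact ⟨hvv, hvv'⟩

/-- `sim` preserves least upper bounds of ascending chains. -/
theorem sim_admissible {Principals Privileges : Type} (A : Principals → Set Privileges)
    (t : Ty) (u : ℕ → LS (Den Privileges t))
    (u' : ℕ → LS (DenS Principals Privileges t))
    (hu : Monotone u) (hu' : Monotone u')
    (v : LS (Den Privileges t)) (v' : LS (DenS Principals Privileges t))
    (hv : IsLUB (Set.range u) v) (hv' : IsLUB (Set.range u') v')
    (h : ∀ i, sim A t (u i) (u' i)) : sim A t v v' := by
  induction t with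
  | bool =>
    rcases sim_chains A Ty.bool u u' hu hu' v v' hv hv' h with
      ⟨rfl, rfl⟩ | ⟨rfl, rfl⟩ | ⟨c, c', w, w', rfl, rfl, hlw, hlw', -, -, hs⟩
    · trivial
    · trivial
    · have hcc : c = c' := funext fun i => (hs i : c i = c' i)
      exact show w = w' from hlw.unique (hcc ▸ hlw')
  | arrow t1 t2 ih1 ih2 =>
    rcases sim_chains A (Ty.arrow t1 t2) u u' hu hu' v v' hv hv' h with
      ⟨rfl, rfl⟩ | ⟨rfl, rfl⟩ | ⟨c, c', w, w', rfl, rfl, hlw, hlw', hmc, hmc', hs⟩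
    · trivial
    · trivial
    · intro S d d' hdd'
      refine ih2 (fun i => c i (privs A S) d) (fun i => c' i S d')
        (fun i j hij => hmc hij (privs A S) d) (fun i j hij => hmc' hij S d')
        (w (privs A S) d) (w' S d') ?_ ?_ (fun i => hs i S d d' hdd')
      · exact isLUB_range_apply (isLUB_range_apply hlw (privs A S)) d
      · exact isLUB_range_apply (isLUB_range_apply hlw' S) d'
end

section
/- The relation rel preserves lubs: for any annotated type θ and ascending chains u, u' : ℕ → ⟦θ*⟧_{⊥⋆}, if rel θ uᵢ u'ᵢ for all i, then rel θ (⨆ᵢ uᵢ) (⨆ᵢ u'ᵢ). -/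
/-- The logical relation `rel` used for erasure correctness. -/
def rel {Privileges : Type} :
    (θ : ATy Privileges) → LS (Den Privileges θ.erase) → LS (Den Privileges θ.erase) → Prop
  | _, none, none => True
  | _, none, some _ => False
  | _, some _, none => False
  | _, some (Sum.inr _), _ => False
  | _, _, some (Sum.inr _) => False
  | ATy.bool, some (Sum.inl b), some (Sum.inl b') => b = b'
  | ATy.arrow θ1 Pi θ2, some (Sum.inl f), some (Sum.inl f') =>
      ∀ (P : Set Privileges), Pi ⊆ P →
        ∀ (d d' : Den Privileges θ1.erase),
          rel θ1 (some (Sum.inl d)) (some (Sum.inl d')) → rel θ2 (f P d) (f' P d')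

lemma rel_shape {Privileges : Type} (θ : ATy Privileges)
    (a b : LS (Den Privileges θ.erase)) (h : rel θ a b) :
    (a = ⊥ ∧ b = ⊥) ∨
      ∃ x y, a = WithBot.some (Sum.inl x) ∧ b = WithBot.some (Sum.inl y) := by
  cases θ <;> rcases a with _ | (x | x) <;> rcases b with _ | (y | y) <;>
    first
      | exact Or.inl ⟨rfl, rfl⟩
      | exact Or.inr ⟨_, _, rfl, rfl⟩
      | exact h.elim

/-- `rel` preserves least upper bounds of ascending chains. -/
theorem rel_admissible {Privileges : Type} (θ : ATy Privileges)
    (u u' : ℕ → LS (Den Privileges θ.erase)) (hu : Monotone u) (hu' : Monotone u')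
    (v v' : LS (Den Privileges θ.erase))
    (hv : IsLUB (Set.range u) v) (hv' : IsLUB (Set.range u') v')
    (h : ∀ i, rel θ (u i) (u' i)) : rel θ v v' := by
  induction θ with
  | bool =>
    have hEq : u = u' := by
      funext i
      rcases rel_shape _ _ _ (h i) with ⟨h1, h2⟩ | ⟨x, y, h1, h2⟩
      · rw [h1, h2]
      · have hxy : x = y := by
          have hi := h i; rw [h1, h2] at hi; exact hi
        rw [h1, h2, hxy]
    subst hEq
    have hvv : v = v' := hv.unique hv'
    subst hvv
    have hub : WithBot.some (Sum.inl true) ∈ upperBounds (Set.range u) := by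
      rintro x ⟨i, rfl⟩
      rcases rel_shape _ _ _ (h i) with ⟨h1, _⟩ | ⟨b, _, h1, _⟩
      · rw [h1]; exact bot_le
      · rw [h1]
        exact WithBot.coe_le_coe.mpr (Sum.inl_le_inl_iff.mpr (Bool.le_true _))
    have hle := hv.2 hub
    rcases v with _ | (b | b)
    · trivial
    · exact rfl
    · exact absurd (WithBot.coe_le_coe.mp hle) (fun hc => Sum.not_inr_le_inl hc)
  | arrow θ1 Pi θ2 ih1 ih2 =>
    by_cases hall : ∀ i, u i = ⊥
    · have hv0 : v = ⊥ := le_bot_iff.mp (hv.2 (by rintro x ⟨i, rfl⟩; rw [hall i]))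
      have hall' : ∀ i, u' i = ⊥ := by
        intro i
        rcases rel_shape _ _ _ (h i) with ⟨_, h2⟩ | ⟨x, y, h1, _⟩
        · exact h2
        · rw [hall i] at h1; simp at h1
      have hv0' : v' = ⊥ := le_bot_iff.mp (hv'.2 (by rintro x ⟨i, rfl⟩; rw [hall' i]))
      rw [hv0, hv0']; trivial
    · push_neg at hall
      obtain ⟨i₀, hi₀⟩ := hall
      rcases rel_shape _ _ _ (h i₀) with ⟨h1, _⟩ | ⟨f₀, f₀', h1, h2⟩
      · exact absurd h1 hi₀
      have extract : ∀ (w : ℕ → LS (Den Privileges (Ty.arrow θ1.erase θ2.erase)))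
          (f : Den Privileges (Ty.arrow θ1.erase θ2.erase)), Monotone w →
          w i₀ = WithBot.some (Sum.inl f) →
          ∀ k, ∃ g, w (i₀ + k) = WithBot.some (Sum.inl g) := by
        intro w f hw hwf k
        have hle : w i₀ ≤ w (i₀ + k) := hw (Nat.le_add_right _ _)
        rw [hwf] at hle
        rcases hx : w (i₀ + k) with _ | (g | g)
        · rw [hx] at hle; exact absurd hle (WithBot.not_coe_le_bot _)
        · exact ⟨g, rfl⟩
        · rw [hx] at hle
          exact (Sum.not_inl_le_inr (WithBot.coe_le_coe.mp hle)).elim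
      choose g hg using extract u f₀ hu h1
      choose g' hg' using extract u' f₀' hu' h2
      have hmg : ∀ {w : ℕ → LS (Den Privileges (Ty.arrow θ1.erase θ2.erase))}
          {G : ℕ → Den Privileges (Ty.arrow θ1.erase θ2.erase)}, Monotone w →
          (∀ k, w (i₀ + k) = WithBot.some (Sum.inl (G k))) →
          ∀ j k, j ≤ k → G j ≤ G k := by
        intro w G hw hG j k hjk
        have := hw (Nat.add_le_add_left hjk i₀)
        rw [hG j, hG k] at this
        exact Sum.inl_le_inl_iff.mp (WithBot.coe_le_coe.mp this)
      have hFex : ∀ (w : ℕ → LS (Den Privileges (Ty.arrow θ1.erase θ2.erase)))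
          (f : Den Privileges (Ty.arrow θ1.erase θ2.erase)) (z : LS _),
          w i₀ = WithBot.some (Sum.inl f) → IsLUB (Set.range w) z →
          ∃ F, z = WithBot.some (Sum.inl F) := by
        intro w f z hwf hz
        have hle : w i₀ ≤ z := hz.1 ⟨i₀, rfl⟩
        rw [hwf] at hle
        rcases hx : z with _ | (F | F)
        · rw [hx] at hle; exact absurd hle (WithBot.not_coe_le_bot _)
        · exact ⟨F, rfl⟩
        · rw [hx] at hle
          exact (Sum.not_inl_le_inr (WithBot.coe_le_coe.mp hle)).elim
      obtain ⟨F, hF⟩ := hFex u f₀ v h1 hv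
      obtain ⟨F', hF'⟩ := hFex u' f₀' v' h2 hv'
      have hgF : ∀ {w : ℕ → LS (Den Privileges (Ty.arrow θ1.erase θ2.erase))}
          {G : ℕ → Den Privileges (Ty.arrow θ1.erase θ2.erase)}
          {z : LS _} {Z : Den Privileges (Ty.arrow θ1.erase θ2.erase)},
          IsLUB (Set.range w) z →
          (∀ k, w (i₀ + k) = WithBot.some (Sum.inl (G k))) →
          z = WithBot.some (Sum.inl Z) → ∀ k, G k ≤ Z := by
        intro w G z Z hz hG hzZ k
        have := hz.1 ⟨i₀ + k, rfl⟩
        rw [hG k, hzZ] at this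
        exact Sum.inl_le_inl_iff.mp (WithBot.coe_le_coe.mp this)
      classical
      have hlub : ∀ {w : ℕ → LS (Den Privileges (Ty.arrow θ1.erase θ2.erase))}
          {G : ℕ → Den Privileges (Ty.arrow θ1.erase θ2.erase)}
          {z : LS _} {Z : Den Privileges (Ty.arrow θ1.erase θ2.erase)},
          Monotone w → IsLUB (Set.range w) z →
          (∀ k, w (i₀ + k) = WithBot.some (Sum.inl (G k))) →
          z = WithBot.some (Sum.inl Z) →
          ∀ (P : Set Privileges) (d : Den Privileges θ1.erase),
            IsLUB (Set.range fun k => G k P d) (Z P d) := by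
        intro w G z Z hw hz hG hzZ P d
        constructor
        · rintro x ⟨k, rfl⟩
          exact hgF hz hG hzZ k P d
        · intro b hb
          set Gd : Den Privileges (Ty.arrow θ1.erase θ2.erase) :=
            fun Q e => if Q = P ∧ e = d then b else Z Q e with hGd
          have hubG : WithBot.some (Sum.inl Gd) ∈ upperBounds (Set.range w) := by
            rintro x ⟨i, rfl⟩
            calc w i ≤ w (i₀ + i) := hw (Nat.le_add_left _ _)
              _ ≤ _ := by
                rw [hG i]
                refine WithBot.coe_le_coe.mpr (Sum.inl_le_inl_iff.mpr ?_)
                intro Q e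
                by_cases hQ : Q = P ∧ e = d
                · obtain ⟨rfl, rfl⟩ := hQ
                  have : Gd Q e = b := by simp [hGd]
                  rw [this]
                  exact hb ⟨i, rfl⟩
                · have : Gd Q e = Z Q e := by simp [hGd, hQ]
                  rw [this]
                  exact hgF hz hG hzZ i Q e
          have hle := hz.2 hubG
          rw [hzZ] at hle
          have hZG : Z ≤ Gd := Sum.inl_le_inl_iff.mp (WithBot.coe_le_coe.mp hle)
          have := hZG P d
          simpa [hGd] using this
      rw [hF, hF']
      intro P hP d d' hd
      exact ih2 (fun k => g k P d) (fun k => g' k P d')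
        (fun j k hjk => hmg hu hg j k hjk P d)
        (fun j k hjk => hmg hu' hg' j k hjk P d')
        _ _ (hlub hu hv hg hF P d) (hlub hu' hv' hg' hF' P d')
        (fun k => by
          have hk := h (i₀ + k)
          rw [hg k, hg' k] at hk
          exact hk P hP d d' hd)
end
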